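/- Disparity score upper bound: Let (Ω, P) be a finite probability space carrying random vectors y_t, y_v, ŷ_t, ŷ_v ∈ ℝ^c and X'_t, X'_v ∈ ℝ^{d'}, such that (i) E[ŷ_t] = E[ŷ_v], (ii) E[X'_t] = E[X'_v], (iii) the pair differences satisfy E[(ŷ_t − ŷ_v) ⊗ X'_t] = E[ŷ_t − ŷ_v] ⊗ E[X'_t], E[(ŷ_v − y_v) ⊗ (X'_t − X'_v)] = E[ŷ_v − y_v] ⊗ E[X'_t − X'_v], and E[(y_t − y_v) ⊗ X'_t] = E[y_t − y_v] ⊗ E[X'_t], and (iv) ‖E[X'_t]‖ ≤ σ. Define g_t = (ŷ_t − y_t, (ŷ_t − y_t) ⊗ X'_t) and g_v = (ŷ_v − y_v, (ŷ_v − y_v) ⊗ X'_v). Then ‖E[g_t] − E[g_v]‖ ≤ E[‖y_t − y_v‖] · √(1 + σ²). -/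

import Mathlib

open scoped RealInnerProductSpace

/-- Outer product of two Euclidean vectors, flattened to a Euclidean vector. -/
def eOuter {c d : ℕ} (u : EuclideanSpace ℝ (Fin c)) (x : EuclideanSpace ℝ (Fin d)) :
    EuclideanSpace ℝ (Fin c × Fin d) :=
  WithLp.toLp 2 (fun q : Fin c × Fin d => u q.1 * x q.2)

/-- Concatenation of two Euclidean vectors. -/
def eConcat {ι κ : Type*} (a : EuclideanSpace ℝ ι) (b : EuclideanSpace ℝ κ) :
    EuclideanSpace ℝ (ι ⊕ κ) :=
  WithLp.toLp 2 (Sum.elim a b)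

/-- Expectation of a vector-valued random variable on a finite probability space
with weights `p`. -/
def eExpect {Ω : Type*} [Fintype Ω] (p : Ω → ℝ) {E : Type*} [AddCommMonoid E] [Module ℝ E]
    (Y : Ω → E) : E :=
  ∑ ω, p ω • Y ω

section helpers
variable {Ω : Type*} [Fintype Ω] (p : Ω → ℝ)

lemma eExpect_sub {E : Type*} [AddCommGroup E] [Module ℝ E] (f g : Ω → E) :
    eExpect p (fun ω => f ω - g ω) = eExpect p f - eExpect p g := by
  simp [eExpect, smul_sub, Finset.sum_sub_distrib]

lemma eExpect_add {E : Type*} [AddCommGroup E] [Module ℝ E] (f g : Ω → E) :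
    eExpect p (fun ω => f ω + g ω) = eExpect p f + eExpect p g := by
  simp [eExpect, smul_add, Finset.sum_add_distrib]

lemma eExpect_apply {ι : Type*} [Fintype ι] (f : Ω → EuclideanSpace ℝ ι) (i : ι) :
    eExpect p f i = ∑ ω, p ω * f ω i := by
  rw [show (eExpect p f i) = EuclideanSpace.projₗ (𝕜 := ℝ) i (eExpect p f) from rfl, eExpect,
    map_sum]
  simp [smul_eq_mul]

lemma eExpect_concat {ι κ : Type*} [Fintype ι] [Fintype κ]
    (f : Ω → EuclideanSpace ℝ ι) (g : Ω → EuclideanSpace ℝ κ) :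
    eExpect p (fun ω => eConcat (f ω) (g ω)) = eConcat (eExpect p f) (eExpect p g) := by
  ext q
  cases q with
  | inl i => rw [show eConcat (eExpect p f) (eExpect p g) (Sum.inl i) = eExpect p f i from rfl,
      eExpect_apply, eExpect_apply]; rfl
  | inr j => rw [show eConcat (eExpect p f) (eExpect p g) (Sum.inr j) = eExpect p g j from rfl,
      eExpect_apply, eExpect_apply]; rfl

lemma eConcat_sub {ι κ : Type*} (a a' : EuclideanSpace ℝ ι) (b b' : EuclideanSpace ℝ κ) :
    eConcat a b - eConcat a' b' = eConcat (a - a') (b - b') := by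
  ext q; cases q <;> simp [eConcat]

lemma eOuter_add_left {c d : ℕ} (u v : EuclideanSpace ℝ (Fin c)) (x : EuclideanSpace ℝ (Fin d)) :
    eOuter (u + v) x = eOuter u x + eOuter v x := by
  ext q; simp [eOuter, add_mul]

lemma eOuter_neg_left {c d : ℕ} (u : EuclideanSpace ℝ (Fin c)) (x : EuclideanSpace ℝ (Fin d)) :
    eOuter (-u) x = -eOuter u x := by
  ext q; simp [eOuter]

lemma eOuter_sub_left {c d : ℕ} (u v : EuclideanSpace ℝ (Fin c)) (x : EuclideanSpace ℝ (Fin d)) :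
    eOuter (u - v) x = eOuter u x - eOuter v x := by
  ext q; simp [eOuter, sub_mul]

lemma eOuter_sub_right {c d : ℕ} (u : EuclideanSpace ℝ (Fin c)) (x y : EuclideanSpace ℝ (Fin d)) :
    eOuter u (x - y) = eOuter u x - eOuter u y := by
  ext q; simp [eOuter, mul_sub]

lemma eOuter_zero_left {c d : ℕ} (x : EuclideanSpace ℝ (Fin d)) :
    eOuter (0 : EuclideanSpace ℝ (Fin c)) x = 0 := by
  ext q; simp [eOuter]

lemma eOuter_zero_right {c d : ℕ} (u : EuclideanSpace ℝ (Fin c)) :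
    eOuter u (0 : EuclideanSpace ℝ (Fin d)) = 0 := by
  ext q; simp [eOuter]

lemma norm_sq_eq {τ : Type*} [Fintype τ] (x : EuclideanSpace ℝ τ) :
    ‖x‖ ^ 2 = ∑ i, (x i) ^ 2 := by
  rw [EuclideanSpace.norm_eq, Real.sq_sqrt (by positivity)]
  simp [sq_abs]

lemma norm_eConcat_sq {ι κ : Type*} [Fintype ι] [Fintype κ]
    (a : EuclideanSpace ℝ ι) (b : EuclideanSpace ℝ κ) :
    ‖eConcat a b‖ ^ 2 = ‖a‖ ^ 2 + ‖b‖ ^ 2 := by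
  rw [norm_sq_eq (eConcat a b), norm_sq_eq a, norm_sq_eq b, Fintype.sum_sum_type]
  simp [eConcat]

lemma norm_eOuter {c d : ℕ} (u : EuclideanSpace ℝ (Fin c)) (x : EuclideanSpace ℝ (Fin d)) :
    ‖eOuter u x‖ = ‖u‖ * ‖x‖ := by
  have : ‖eOuter u x‖ ^ 2 = (‖u‖ * ‖x‖) ^ 2 := by
    rw [norm_sq_eq (eOuter u x), mul_pow, norm_sq_eq u, norm_sq_eq x, Fintype.sum_prod_type,
      Finset.sum_mul_sum]
    exact Finset.sum_congr rfl fun i _ => Finset.sum_congr rfl fun j _ => by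
      simp [eOuter, mul_pow]
  have h1 : (0:ℝ) ≤ ‖eOuter u x‖ := norm_nonneg _
  have h2 : (0:ℝ) ≤ ‖u‖ * ‖x‖ := by positivity
  nlinarith

end helpers

theorem disparity_upper_bound {Ω : Type*} [Fintype Ω] (p : Ω → ℝ)
    (hp : ∀ ω, 0 ≤ p ω) (hsum : ∑ ω, p ω = 1)
    {c d' : ℕ} (yt yv yht yhv : Ω → EuclideanSpace ℝ (Fin c))
    (Xt Xv : Ω → EuclideanSpace ℝ (Fin d')) (σ : ℝ)
    (h1 : eExpect p yht = eExpect p yhv)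
    (h2 : eExpect p Xt = eExpect p Xv)
    (h3 : eExpect p (fun ω => eOuter (yht ω - yhv ω) (Xt ω))
        = eOuter (eExpect p (fun ω => yht ω - yhv ω)) (eExpect p Xt))
    (h4 : eExpect p (fun ω => eOuter (yhv ω - yv ω) (Xt ω - Xv ω))
        = eOuter (eExpect p (fun ω => yhv ω - yv ω)) (eExpect p (fun ω => Xt ω - Xv ω)))
    (h5 : eExpect p (fun ω => eOuter (yt ω - yv ω) (Xt ω))
        = eOuter (eExpect p (fun ω => yt ω - yv ω)) (eExpect p Xt))
    (hσ : ‖eExpect p Xt‖ ≤ σ) :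
    ‖eExpect p (fun ω => eConcat (yht ω - yt ω) (eOuter (yht ω - yt ω) (Xt ω)))
        - eExpect p (fun ω => eConcat (yhv ω - yv ω) (eOuter (yhv ω - yv ω) (Xv ω)))‖
      ≤ (∑ ω, p ω * ‖yt ω - yv ω‖) * Real.sqrt (1 + σ ^ 2) := by
  obtain ⟨A, hA⟩ : ∃ A, A = eExpect p (fun ω => yv ω - yt ω) := ⟨_, rfl⟩
  obtain ⟨M, hM⟩ : ∃ M, M = eExpect p Xt := ⟨_, rfl⟩
  have hz1 : eExpect p (fun ω => yht ω - yhv ω) = 0 := by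
    rw [eExpect_sub, h1, sub_self]
  have hz2 : eExpect p (fun ω => Xt ω - Xv ω) = 0 := by
    rw [eExpect_sub, h2, sub_self]
  have hAneg : A = -eExpect p (fun ω => yt ω - yv ω) := by
    rw [hA, eExpect_sub, eExpect_sub, neg_sub]
  have hfst : eExpect p (fun ω => yht ω - yt ω) - eExpect p (fun ω => yhv ω - yv ω) = A := by
    rw [← eExpect_sub]
    have heq : (fun ω => (yht ω - yt ω) - (yhv ω - yv ω))
        = fun ω => (yht ω - yhv ω) + (yv ω - yt ω) := by
      funext ω; abel
    rw [heq, eExpect_add, hz1, zero_add, hA]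
  have hE2 : eExpect p (fun ω => eOuter (yhv ω - yv ω) (Xt ω))
      = eExpect p (fun ω => eOuter (yhv ω - yv ω) (Xv ω)) := by
    have hpt : (fun ω => eOuter (yhv ω - yv ω) (Xt ω - Xv ω))
        = fun ω => eOuter (yhv ω - yv ω) (Xt ω) - eOuter (yhv ω - yv ω) (Xv ω) := by
      funext ω; rw [eOuter_sub_right]
    have h4' := h4
    rw [hpt, eExpect_sub, hz2, eOuter_zero_right] at h4'
    exact sub_eq_zero.mp h4'
  have hsnd : eExpect p (fun ω => eOuter (yht ω - yt ω) (Xt ω))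
      - eExpect p (fun ω => eOuter (yhv ω - yv ω) (Xv ω)) = eOuter A M := by
    have hdecomp : (fun ω => eOuter (yht ω - yt ω) (Xt ω))
        = fun ω => (eOuter (yht ω - yhv ω) (Xt ω) + eOuter (yhv ω - yv ω) (Xt ω))
            - eOuter (yt ω - yv ω) (Xt ω) := by
      funext ω
      rw [← eOuter_add_left, ← eOuter_sub_left]
      congr 1
      abel
    rw [hdecomp, eExpect_sub, eExpect_add, h3, hz1, eOuter_zero_left, zero_add, hE2, h5,
      sub_sub_cancel_left, hAneg, eOuter_neg_left, hM]
  have hconc : eExpect p (fun ω => eConcat (yht ω - yt ω) (eOuter (yht ω - yt ω) (Xt ω)))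
        - eExpect p (fun ω => eConcat (yhv ω - yv ω) (eOuter (yhv ω - yv ω) (Xv ω)))
      = eConcat A (eOuter A M) := by
    rw [eExpect_concat, eExpect_concat, eConcat_sub, hfst, hsnd]
  rw [hconc]
  have hnorm : ‖eConcat A (eOuter A M)‖ = ‖A‖ * Real.sqrt (1 + ‖M‖ ^ 2) := by
    have hsq := norm_eConcat_sq A (eOuter A M)
    rw [norm_eOuter] at hsq
    have key : ‖eConcat A (eOuter A M)‖ ^ 2 = (‖A‖ * Real.sqrt (1 + ‖M‖ ^ 2)) ^ 2 := by
      rw [mul_pow, Real.sq_sqrt (by positivity), hsq]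
      ring
    have h1' : (0:ℝ) ≤ ‖eConcat A (eOuter A M)‖ := norm_nonneg _
    have h2' : (0:ℝ) ≤ ‖A‖ * Real.sqrt (1 + ‖M‖ ^ 2) := by positivity
    have := congrArg Real.sqrt key
    rwa [Real.sqrt_sq h1', Real.sqrt_sq h2'] at this
  rw [hnorm]
  have hAle : ‖A‖ ≤ ∑ ω, p ω * ‖yt ω - yv ω‖ := by
    rw [hA]
    calc ‖eExpect p (fun ω => yv ω - yt ω)‖ ≤ ∑ ω, ‖p ω • (yv ω - yt ω)‖ := norm_sum_le _ _
      _ = ∑ ω, p ω * ‖yt ω - yv ω‖ := by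
        refine Finset.sum_congr rfl fun ω _ => ?_
        rw [norm_smul, Real.norm_eq_abs, abs_of_nonneg (hp ω), norm_sub_rev]
  have hMσ : ‖M‖ ≤ σ := hM ▸ hσ
  have hsqle : Real.sqrt (1 + ‖M‖ ^ 2) ≤ Real.sqrt (1 + σ ^ 2) := by
    apply Real.sqrt_le_sqrt
    nlinarith [norm_nonneg M]
  have hsum_nonneg : (0:ℝ) ≤ ∑ ω, p ω * ‖yt ω - yv ω‖ :=
    Finset.sum_nonneg fun ω _ => mul_nonneg (hp ω) (norm_nonneg _)
  exact mul_le_mul hAle hsqle (Real.sqrt_nonneg _) hsum_nonneg
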